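/- Let k be a field, (V,q) a nonsingular quadratic space over k of dimension ≥ 2, and S = k[X]/(P) for P ∈ k[X] monic of odd degree d. If q becomes isotropic over S (i.e., there is a unimodular vector w ∈ V ⊗_k S with q_S(w) = 0), then q is isotropic over k. -/

import Mathlib

open scoped TensorProduct

set_option synthInstance.maxHeartbeats 1000000
set_option maxHeartbeats 1000000

/-- `Q'` is the base change of the quadratic form `Q` along `R → F`. -/
def IsQfBaseChange {R : Type*} [CommRing R] {M : Type*} [AddCommGroup M] [Module R M]
    (F : Type*) [CommRing F] [Algebra R F]
    (Q : QuadraticForm R M) (Q' : QuadraticForm F (F ⊗[R] M)) : Prop :=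
  (∀ (f : F) (m : M), Q' (f ⊗ₜ m) = f ^ 2 * algebraMap R F (Q m)) ∧
  (∀ (f g : F) (m n : M), QuadraticMap.polar Q' (f ⊗ₜ m) (g ⊗ₜ n)
      = f * g * algebraMap R F (QuadraticMap.polar Q m n))

/-- A quadratic form is nonsingular if the radical of its base change to any
field `F` that is an `R`-algebra vanishes. -/
def QfNonsingular {R : Type*} [CommRing R] {M : Type*} [AddCommGroup M] [Module R M]
    (Q : QuadraticForm R M) : Prop :=
  ∀ (F : Type*) [Field F] [Algebra R F] (Q' : QuadraticForm F (F ⊗[R] M)),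
    IsQfBaseChange F Q Q' →
    ∀ x : F ⊗[R] M, Q' x = 0 → (∀ y : F ⊗[R] M, QuadraticMap.polar Q' x y = 0) → x = 0

open Polynomial

section Qext

variable {k : Type*} [Field k] {V : Type*} [AddCommGroup V] [Module k V]
variable (Q : QuadraticForm k V) {n : ℕ} (b : Module.Basis (Fin n) k V)

noncomputable def qext (A : Type*) [CommRing A] [Algebra k A] (c : Fin n → A) : A :=
  ∑ i, c i ^ 2 * algebraMap k A (Q (b i)) +
  ∑ ij ∈ Finset.univ.sym2 with ¬ ij.IsDiag,
    Sym2.lift ⟨fun i j => c i * c j * algebraMap k A (QuadraticMap.polar Q (b i) (b j)),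
      fun i j => by dsimp only; rw [QuadraticMap.polar_comm]; ring⟩ ij

theorem qext_algHom {A B : Type*} [CommRing A] [Algebra k A] [CommRing B] [Algebra k B]
    (f : A →ₐ[k] B) (c : Fin n → A) :
    qext Q b B (fun i => f (c i)) = f (qext Q b A c) := by
  rw [qext, qext, map_add, map_sum, map_sum]
  congr 1
  · refine Finset.sum_congr rfl fun i _ => ?_
    rw [map_mul, map_pow, AlgHom.commutes]
  · refine Finset.sum_congr rfl fun ij _ => ?_
    induction ij using Sym2.ind with
    | _ i j =>
      simp only [Sym2.lift_mk]
      rw [map_mul, map_mul, AlgHom.commutes]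

theorem qext_k (c : Fin n → k) : qext Q b k c = Q (∑ i, c i • b i) := by
  rw [QuadraticMap.map_sum, qext]
  congr 1
  · refine Finset.sum_congr rfl fun i _ => ?_
    rw [QuadraticMap.map_smul, Algebra.algebraMap_self_apply, smul_eq_mul, sq]
  · refine Finset.sum_congr rfl fun ij _ => ?_
    induction ij using Sym2.ind with
    | _ i j =>
      simp only [Sym2.lift_mk, Sym2.map_mk, QuadraticMap.polarSym2_sym2Mk]
      rw [QuadraticMap.polar_smul_left, QuadraticMap.polar_smul_right,
        Algebra.algebraMap_self_apply, smul_eq_mul, smul_eq_mul]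
      ring

theorem qext_tensor {A : Type*} [CommRing A] [Algebra k A]
    (Q' : QuadraticForm A (A ⊗[k] V))
    (h1 : ∀ (f : A) (m : V), Q' (f ⊗ₜ m) = f ^ 2 * algebraMap k A (Q m))
    (h2 : ∀ (f g : A) (m m' : V), QuadraticMap.polar Q' (f ⊗ₜ m) (g ⊗ₜ m')
      = f * g * algebraMap k A (QuadraticMap.polar Q m m'))
    (a : Fin n → A) :
    Q' (∑ i, a i ⊗ₜ b i) = qext Q b A a := by
  rw [QuadraticMap.map_sum, qext]
  congr 1
  · exact Finset.sum_congr rfl fun i _ => h1 _ _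
  · refine Finset.sum_congr rfl fun ij _ => ?_
    induction ij using Sym2.ind with
    | _ i j =>
      simp only [Sym2.lift_mk, Sym2.map_mk, QuadraticMap.polarSym2_sym2Mk]
      rw [h2]

theorem qext_mul {A : Type*} [CommRing A] [Algebra k A] (a : A) (c : Fin n → A) :
    qext Q b A (fun i => a * c i) = a ^ 2 * qext Q b A c := by
  rw [qext, qext, mul_add, Finset.mul_sum, Finset.mul_sum]
  congr 1
  · exact Finset.sum_congr rfl fun i _ => by ring
  · refine Finset.sum_congr rfl fun ij _ => ?_
    induction ij using Sym2.ind with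
    | _ i j =>
      simp only [Sym2.lift_mk]
      ring

theorem qext_coeff (c : Fin n → k[X]) (e : ℕ) (h : ∀ i, (c i).natDegree ≤ e) :
    (qext Q b k[X] c).coeff (e + e) = qext Q b k (fun i => (c i).coeff e) := by
  rw [qext, qext, coeff_add, finset_sum_coeff, finset_sum_coeff]
  congr 1
  · refine Finset.sum_congr rfl fun i _ => ?_
    rw [algebraMap_eq, coeff_mul_C, sq, sq,
      coeff_mul_add_eq_of_natDegree_le (h i) (h i), Algebra.algebraMap_self_apply]
  · refine Finset.sum_congr rfl fun ij _ => ?_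
    induction ij using Sym2.ind with
    | _ i j =>
      simp only [Sym2.lift_mk]
      rw [algebraMap_eq, coeff_mul_C, coeff_mul_add_eq_of_natDegree_le (h i) (h j),
        Algebra.algebraMap_self_apply]

theorem qext_natDegree_le (c : Fin n → k[X]) (e : ℕ) (h : ∀ i, (c i).natDegree ≤ e) :
    (qext Q b k[X] c).natDegree ≤ e + e := by
  rw [qext]
  refine (natDegree_add_le _ _).trans (max_le ?_ ?_)
  · refine natDegree_sum_le_of_forall_le _ _ fun i _ => ?_
    refine (natDegree_mul_le).trans ?_
    rw [algebraMap_eq, natDegree_C, add_zero, sq]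
    exact natDegree_mul_le.trans (add_le_add (h i) (h i))
  · refine natDegree_sum_le_of_forall_le _ _ fun ij _ => ?_
    induction ij using Sym2.ind with
    | _ i j =>
      simp only [Sym2.lift_mk]
      refine (natDegree_mul_le).trans ?_
      rw [algebraMap_eq, natDegree_C, add_zero]
      exact natDegree_mul_le.trans (add_le_add (h i) (h j))

theorem qext_dvd_sub (ρ : k[X]) (c c' : Fin n → k[X]) (h : ∀ i, ρ ∣ c i - c' i) :
    ρ ∣ qext Q b k[X] c - qext Q b k[X] c' := by
  set f := Ideal.Quotient.mkₐ k (Ideal.span {ρ}) with hf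
  have hc : ∀ i, f (c i) = f (c' i) := fun i =>
    Ideal.Quotient.eq.mpr (Ideal.mem_span_singleton.mpr (h i))
  have : f (qext Q b k[X] c) = f (qext Q b k[X] c') := by
    rw [← qext_algHom Q b f c, ← qext_algHom Q b f c']
    exact congrArg _ (funext hc)
  rw [← Ideal.mem_span_singleton]
  exact Ideal.Quotient.eq.mp this

end Qext

theorem natDegree_pos_of_not_isUnit {k : Type*} [Field k] {p : k[X]}
    (hp : p ≠ 0) (hu : ¬ IsUnit p) : 0 < p.natDegree := by
  by_contra hd
  push_neg at hd
  apply hu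
  rw [eq_C_of_natDegree_eq_zero (Nat.le_zero.mp hd)]
  exact isUnit_C.mpr (isUnit_iff_ne_zero.mpr fun hco => hp (by
    rw [eq_C_of_natDegree_eq_zero (Nat.le_zero.mp hd), hco, map_zero]))

theorem exists_odd_monic_irreducible_factor {k : Type*} [Field k]
    (h : k[X]) (hne : h ≠ 0) (hodd : Odd h.natDegree) :
    ∃ ρ : k[X], ρ.Monic ∧ Irreducible ρ ∧ Odd ρ.natDegree ∧ ρ ∣ h := by
  suffices H : ∀ d : ℕ, ∀ h : k[X], h ≠ 0 → Odd h.natDegree → h.natDegree = d →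
      ∃ ρ : k[X], ρ.Monic ∧ Irreducible ρ ∧ Odd ρ.natDegree ∧ ρ ∣ h by
    exact H h.natDegree h hne hodd rfl
  intro d
  induction d using Nat.strong_induction_on with
  | _ d ih =>
  intro h hne hodd hdeq
  subst hdeq
  have hd1 : 0 < h.natDegree := by rcases hodd with ⟨m, hm⟩; omega
  have hnu : ¬ IsUnit h := not_isUnit_of_natDegree_pos h hd1
  by_cases hirr : Irreducible h
  · have hlu : IsUnit (C h.leadingCoeff⁻¹) :=
      isUnit_C.mpr (isUnit_iff_ne_zero.mpr (inv_ne_zero (leadingCoeff_ne_zero.mpr hne)))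
    have hassoc : Associated h (h * C h.leadingCoeff⁻¹) := associated_mul_unit_right h _ hlu
    exact ⟨h * C h.leadingCoeff⁻¹, monic_mul_leadingCoeff_inv hne, hassoc.irreducible hirr,
      by rwa [natDegree_mul_C (inv_ne_zero (leadingCoeff_ne_zero.mpr hne))], hassoc.symm.dvd⟩
  · rw [irreducible_iff] at hirr
    push_neg at hirr
    obtain ⟨a, c, hac, hau, hcu⟩ := hirr hnu
    have ha0 : a ≠ 0 := fun h0 => hne (by rw [hac, h0, zero_mul])
    have hc0 : c ≠ 0 := fun h0 => hne (by rw [hac, h0, mul_zero])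
    have hadeg : 0 < a.natDegree := natDegree_pos_of_not_isUnit ha0 hau
    have hcdeg : 0 < c.natDegree := natDegree_pos_of_not_isUnit hc0 hcu
    have hsum : a.natDegree + c.natDegree = h.natDegree := (hac ▸ natDegree_mul ha0 hc0).symm
    by_cases hoa : Odd a.natDegree
    · obtain ⟨ρ, h1, h2, h3, h4⟩ := ih a.natDegree (by omega) a ha0 hoa rfl
      exact ⟨ρ, h1, h2, h3, h4.trans ⟨c, hac⟩⟩
    · have hoc : Odd c.natDegree := by
        rcases Nat.even_or_odd c.natDegree with he | ho
        · exfalso; apply hoa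
          rcases hodd with ⟨m, hm⟩; rcases he with ⟨l, hl⟩
          exact ⟨m - l, by omega⟩
        · exact ho
      obtain ⟨ρ, h1, h2, h3, h4⟩ := ih c.natDegree (by omega) c hc0 hoc rfl
      exact ⟨ρ, h1, h2, h3, h4.trans ⟨a, by rw [hac, mul_comm]⟩⟩

section Key
variable {k : Type*} [Field k] {V : Type*} [AddCommGroup V] [Module k V]
variable (Q : QuadraticForm k V) {n : ℕ} (b : Module.Basis (Fin n) k V)

theorem springer_key (haniso : ∀ v : V, Q v = 0 → v = 0) :
    ∀ d : ℕ, ∀ π : k[X], Irreducible π → Odd π.natDegree → π.natDegree = d →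
    ∀ c : Fin n → k[X], (∀ i, (c i).natDegree < π.natDegree) →
    (∃ i, ¬ π ∣ c i) → π ∣ qext Q b k[X] c → False := by
  classical
  intro d
  induction d using Nat.strong_induction_on with
  | _ d ih =>
  rintro π hπ hπodd hπd c hdeg ⟨i₀, hi₀⟩ hdvd
  have hπ1 : 0 < π.natDegree := by rcases hπodd with ⟨m, hm⟩; omega
  have hπ0 : π ≠ 0 := hπ.ne_zero
  have hne : (Finset.univ : Finset (Fin n)).Nonempty := ⟨i₀, Finset.mem_univ _⟩
  obtain ⟨c', hc', hgcd⟩ := Finset.extract_gcd c hne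
  set g := Finset.univ.gcd c with hg
  have hci : ∀ i, c i = g * c' i := fun i => hc' i (Finset.mem_univ i)
  have hπg : ¬ π ∣ g := fun hd => hi₀ (by rw [hci i₀]; exact hd.mul_right _)
  have hg0 : g ≠ 0 := fun h0 => hπg (h0 ▸ dvd_zero π)
  have hπnot' : ¬ π ∣ c' i₀ := fun hd => hi₀ (by rw [hci i₀]; exact hd.mul_left g)
  have hc'0 : c' i₀ ≠ 0 := fun h0 => hπnot' (h0 ▸ dvd_zero π)
  have hdvd' : π ∣ qext Q b k[X] c' := by
    have heq : qext Q b k[X] c = g ^ 2 * qext Q b k[X] c' := by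
      rw [show c = fun i => g * c' i from funext hci]
      exact qext_mul Q b g c'
    rcases hπ.prime.dvd_mul.mp (heq ▸ hdvd) with h1 | h2
    · exact absurd (hπ.prime.dvd_of_dvd_pow h1) hπg
    · exact h2
  have hdeg' : ∀ i, (c' i).natDegree < π.natDegree := by
    intro i
    by_cases h0 : c' i = 0
    · rw [h0, natDegree_zero]; exact hπ1
    · have h1 : (c' i).natDegree ≤ (c i).natDegree := by
        rw [hci i, natDegree_mul hg0 h0]; omega
      exact lt_of_le_of_lt h1 (hdeg i)
  set e := Finset.univ.sup (fun i => (c' i).natDegree) with he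
  have hce : ∀ i, (c' i).natDegree ≤ e := fun i => he ▸ Finset.le_sup (f := fun i => (c' i).natDegree) (Finset.mem_univ i)
  have he_lt : e < π.natDegree := (Finset.sup_lt_iff hπ1).mpr (fun i _ => hdeg' i)
  have hvne : ∃ j, (c' j).coeff e ≠ 0 := by
    by_cases he0 : e = 0
    · refine ⟨i₀, fun h0 => hc'0 ?_⟩
      have h1 : (c' i₀).natDegree ≤ 0 := he0 ▸ hce i₀
      have h2 : (c' i₀).coeff 0 = 0 := he0 ▸ h0
      rw [eq_C_of_natDegree_le_zero h1, h2, map_zero]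
    · obtain ⟨j, _, hj⟩ := Finset.exists_mem_eq_sup Finset.univ hne
        (fun i => (c' i).natDegree)
      have hj' : (c' j).natDegree = e := hj.symm
      have hj0 : c' j ≠ 0 := fun h0 => he0 (by rw [← hj', h0, natDegree_zero])
      exact ⟨j, hj' ▸ (leadingCoeff_ne_zero.mpr hj0)⟩
  set v : V := ∑ i, (c' i).coeff e • b i with hv
  have hvne0 : v ≠ 0 := by
    intro h0
    have : v = b.equivFun.symm (fun i => (c' i).coeff e) := (b.equivFun_symm_apply _).symm
    rw [this] at h0
    obtain ⟨j, hj⟩ := hvne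
    exact hj (congrFun (b.equivFun.symm.map_eq_zero_iff.mp h0) j)
  have hQv : Q v ≠ 0 := fun h0 => hvne0 (haniso v h0)
  have hcoeff : (qext Q b k[X] c').coeff (e + e) = Q v := by
    rw [qext_coeff Q b c' e hce, qext_k]
  have hne0 : qext Q b k[X] c' ≠ 0 := fun h0 => hQv (by rw [← hcoeff, h0, coeff_zero])
  have hndeg : (qext Q b k[X] c').natDegree = e + e :=
    le_antisymm (qext_natDegree_le Q b c' e hce)
      (le_natDegree_of_ne_zero (hcoeff ▸ hQv))
  obtain ⟨h, hh⟩ := hdvd'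
  have hh0 : h ≠ 0 := fun h0 => hne0 (by rw [hh, h0, mul_zero])
  have hhd : π.natDegree + h.natDegree = e + e := by
    rw [← natDegree_mul hπ0 hh0, ← hh, hndeg]
  have hhodd : Odd h.natDegree := by
    rcases hπodd with ⟨a, ha⟩
    exact ⟨e - a - 1, by omega⟩
  have hhlt : h.natDegree < π.natDegree := by omega
  obtain ⟨ρ, hρm, hρirr, hρodd, hρdvd⟩ := exists_odd_monic_irreducible_factor h hh0 hhodd
  have hρd : ρ.natDegree < d :=
    lt_of_le_of_lt (natDegree_le_of_dvd hρdvd hh0) (hπd ▸ hhlt)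
  have hρ1 : ρ ≠ 1 := fun h1 => hρirr.not_isUnit (h1 ▸ isUnit_one)
  set c'' := fun i => c' i %ₘ ρ with hc''
  have hdeg'' : ∀ i, (c'' i).natDegree < ρ.natDegree := fun i =>
    natDegree_modByMonic_lt _ hρm hρ1
  have hsub : ∀ i, ρ ∣ c' i - c'' i := fun i =>
    ⟨c' i /ₘ ρ, by rw [eq_comm, ← sub_eq_iff_eq_add'.mpr (modByMonic_add_div (c' i) ρ).symm]⟩
  have hnotall : ∃ i, ¬ ρ ∣ c'' i := by
    by_contra hall
    push_neg at hall
    have hall' : ∀ i, ρ ∣ c' i := fun i => by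
      have := dvd_add (hsub i) (hall i)
      rwa [sub_add_cancel] at this
    have : ρ ∣ Finset.univ.gcd c' := Finset.dvd_gcd (fun i _ => hall' i)
    rw [hgcd] at this
    exact hρirr.not_isUnit (isUnit_of_dvd_one this)
  have hρq : ρ ∣ qext Q b k[X] c'' := by
    have h1 : ρ ∣ qext Q b k[X] c' := hρdvd.trans ⟨π, by rw [hh]; ring⟩
    have h2 := qext_dvd_sub Q b ρ c' c'' hsub
    have := dvd_sub h1 h2
    rwa [sub_sub_cancel] at this
  exact ih ρ.natDegree hρd ρ hρirr hρodd rfl c'' hdeg'' hnotall hρq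

end Key

/-- Springer's theorem over `S = k[X]/(P)`, `P` monic of odd degree: if the
base change of a nonsingular quadratic space `(V,q)` of dimension `≥ 2` to `S`
is isotropic (has a unimodular isotropic vector), then `q` is isotropic. -/
theorem stmt6 {k : Type*} {V : Type*} [Field k] [AddCommGroup V] [Module k V]
    [FiniteDimensional k V] (hdim : 2 ≤ Module.finrank k V)
    (Q : QuadraticForm k V) (hns : QfNonsingular Q)
    (P : Polynomial k) (hP : P.Monic) (hodd : Odd P.natDegree)
    (QS : QuadraticForm (Polynomial k ⧸ Ideal.span {P})
      ((Polynomial k ⧸ Ideal.span {P}) ⊗[k] V))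
    (hQS : IsQfBaseChange (Polynomial k ⧸ Ideal.span {P}) Q QS)
    (w : (Polynomial k ⧸ Ideal.span {P}) ⊗[k] V)
    (hw : ∃ φ : ((Polynomial k ⧸ Ideal.span {P}) ⊗[k] V)
        →ₗ[Polynomial k ⧸ Ideal.span {P}] (Polynomial k ⧸ Ideal.span {P}), φ w = 1)
    (hw0 : QS w = 0) :
    ∃ v : V, v ≠ 0 ∧ Q v = 0 := by
  classical
  by_contra hcon
  push_neg at hcon
  have haniso : ∀ v : V, Q v = 0 → v = 0 := by
    intro v hv
    by_contra h0
    exact hcon v h0 hv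
  set S := Polynomial k ⧸ Ideal.span {P} with hS
  set b := Module.finBasis k V with hb
  have hP0 : P ≠ 0 := hP.ne_zero
  set mk' : Polynomial k →ₐ[k] S := Ideal.Quotient.mkₐ k (Ideal.span {P}) with hmk
  have hmkk : ∀ p : Polynomial k, mk' p = Ideal.Quotient.mk (Ideal.span {P}) p :=
    fun _ => rfl
  have hsurj : ∀ i, ∃ p : Polynomial k, mk' p = (b.baseChange S).repr w i := by
    intro i
    obtain ⟨p, hp⟩ := Ideal.Quotient.mk_surjective (I := Ideal.span {P})
      ((b.baseChange S).repr w i)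
    exact ⟨p, by rw [hmkk]; exact hp⟩
  choose c hc using hsurj
  have hwsum : w = ∑ i, (mk' (c i)) ⊗ₜ[k] b i := by
    conv_lhs => rw [← (b.baseChange S).sum_repr w]
    refine Finset.sum_congr rfl fun i _ => ?_
    rw [Module.Basis.baseChange_apply, TensorProduct.smul_tmul', smul_eq_mul, mul_one, ← hc i]
  have hQw0 : mk' (qext Q b (Polynomial k) c) = 0 := by
    have h1 : qext Q b S (fun i => mk' (c i)) = mk' (qext Q b (Polynomial k) c) :=
      qext_algHom Q b mk' c
    have h2 : QS w = qext Q b S (fun i => mk' (c i)) := by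
      rw [hwsum]; exact qext_tensor Q b QS hQS.1 hQS.2 _
    rw [← h1, ← h2, hw0]
  have hPdvd : P ∣ qext Q b (Polynomial k) c := by
    rw [hmkk] at hQw0
    exact Ideal.mem_span_singleton.mp (Ideal.Quotient.eq_zero_iff_mem.mp hQw0)
  obtain ⟨π, hπm, hπirr, hπodd, hπP⟩ := exists_odd_monic_irreducible_factor P hP0 hodd
  have hπ1 : π ≠ 1 := fun h1 => hπirr.not_isUnit (h1 ▸ isUnit_one)
  set c'' := fun i => c i %ₘ π with hc''
  have hdeg'' : ∀ i, (c'' i).natDegree < π.natDegree := fun i =>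
    Polynomial.natDegree_modByMonic_lt _ hπm hπ1
  have hsub : ∀ i, π ∣ c i - c'' i := fun i =>
    ⟨c i /ₘ π,
      by rw [eq_comm, ← sub_eq_iff_eq_add'.mpr (Polynomial.modByMonic_add_div (c i) π).symm]⟩
  have hπq : π ∣ qext Q b (Polynomial k) c'' := by
    have h1 : π ∣ qext Q b (Polynomial k) c := hπP.trans hPdvd
    have h2 := qext_dvd_sub Q b π c c'' hsub
    have h3 := dvd_sub h1 h2
    rwa [sub_sub_cancel] at h3
  have hnotall : ∃ i, ¬ π ∣ c'' i := by
    by_contra hall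
    push_neg at hall
    have hall' : ∀ i, π ∣ c i := fun i => by
      have h4 := dvd_add (hsub i) (hall i); rwa [sub_add_cancel] at h4
    obtain ⟨φ, hφ⟩ := hw
    choose t ht using hall'
    have hφw : φ w = mk' π * ∑ i, mk' (t i) * φ ((1:S) ⊗ₜ[k] b i) := by
      conv_lhs => rw [hwsum]
      rw [map_sum, Finset.mul_sum]
      refine Finset.sum_congr rfl fun i _ => ?_
      have h5 : (mk' (c i)) ⊗ₜ[k] b i = mk' (c i) • ((1:S) ⊗ₜ[k] b i) := by
        rw [TensorProduct.smul_tmul', smul_eq_mul, mul_one]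
      rw [h5, map_smul, smul_eq_mul, ht i, map_mul]
      ring
    obtain ⟨U, hU⟩ := Ideal.Quotient.mk_surjective (I := Ideal.span {P})
      (∑ i, mk' (t i) * φ ((1:S) ⊗ₜ[k] b i))
    have hU1 : Ideal.Quotient.mk (Ideal.span {P}) (π * U) =
        Ideal.Quotient.mk (Ideal.span {P}) 1 := by
      rw [map_mul, map_one, hU, ← hmkk π, ← hφw, hφ]
    have hPdvd1 : P ∣ π * U - 1 :=
      Ideal.mem_span_singleton.mp (Ideal.Quotient.eq.mp hU1)
    have hπ1' : π ∣ (1 : Polynomial k) := by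
      have h6 : π ∣ π * U - (π * U - 1) := dvd_sub (dvd_mul_right π U) (hπP.trans hPdvd1)
      rwa [sub_sub_cancel] at h6
    exact hπirr.not_isUnit (isUnit_of_dvd_one hπ1')
  exact springer_key Q b haniso π.natDegree π hπirr hπodd rfl c'' hdeg'' hnotall hπq
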